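/- arXiv:1806.07591 — 3 statements merged into one kernel-verified Lean document; each statement's English description precedes it below -/
import Mathlib

section
/- Let V ⊆ ℝ³ be a compact convex set with positive Lebesgue measure and let y be a point in the interior of V. Set r := max_{z ∈ V} |z − y|. Then there exists a point y' ∈ V such that ∫_V ( |x − y|² − min(|x − y|, |x − y'|)² ) dx ≥ (2²·3³)/(5²·10³) · r² · |V|. -/
open MeasureTheory
open scoped RealInnerProductSpace

noncomputable section

/-- Euclidean 3-space. -/
abbrev E3 := EuclideanSpace ℝ (Fin 3)

lemma aux_norm_smul_add_sq (a b : ℝ) (u w : E3) :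
    ‖a • u + b • w‖ ^ 2 =
      a ^ 2 * ‖u‖ ^ 2 + 2 * (a * b) * ⟪u, w⟫ + b ^ 2 * ‖w‖ ^ 2 := by
  rw [norm_add_sq_real, norm_smul, norm_smul, real_inner_smul_left, real_inner_smul_right,
    mul_pow, mul_pow, Real.norm_eq_abs, Real.norm_eq_abs, sq_abs, sq_abs]
  ring

theorem stmt_0 (V : Set E3) (hVcomp : IsCompact V) (hVconv : Convex ℝ V)
    (hVvol : 0 < volume V) (y : E3) (hy : y ∈ interior V)
    (r : ℝ) (hr : IsGreatest ((fun z => dist z y) '' V) r) :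
    ∃ y' ∈ V,
      (∫ x in V, (dist x y ^ 2 - (min (dist x y) (dist x y')) ^ 2)) ≥
        ((2 ^ 2 * 3 ^ 3 : ℝ) / (5 ^ 2 * 10 ^ 3)) * r ^ 2 * (volume V).toReal := by
  obtain ⟨⟨z, hzV, hzr⟩, hub⟩ := hr
  have hyV : y ∈ V := interior_subset hy
  have hler : ∀ v ∈ V, dist v y ≤ r := fun v hv => hub ⟨v, hv, rfl⟩
  -- the chosen second point
  set y' : E3 := y + (2/5 : ℝ) • (z - y) with hy'def
  have hy'V : y' ∈ V := by
    have h := hVconv hyV hzV (by norm_num : (0:ℝ) ≤ 3/5) (by norm_num : (0:ℝ) ≤ 2/5)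
      (by norm_num)
    have : (3/5 : ℝ) • y + (2/5 : ℝ) • z = y' := by rw [hy'def]; module
    rwa [this] at h
  refine ⟨y', hy'V, ?_⟩
  set f : E3 → ℝ := fun x => dist x y ^ 2 - (min (dist x y) (dist x y')) ^ 2 with hfdef
  have hf0 : ∀ x, 0 ≤ f x := by
    intro x
    have h1 : min (dist x y) (dist x y') ≤ dist x y := min_le_left _ _
    have h2 : 0 ≤ min (dist x y) (dist x y') := le_min dist_nonneg dist_nonneg
    have := pow_le_pow_left₀ h2 h1 2
    simpa [hfdef, sub_nonneg] using this
  set S : Set E3 := AffineMap.homothety z (3/10 : ℝ) '' V with hSdef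
  have hSsub : S ⊆ V := by
    rintro x ⟨v, hv, rfl⟩
    have h := hVconv hzV hv (by norm_num : (0:ℝ) ≤ 7/10) (by norm_num : (0:ℝ) ≤ 3/10)
      (by norm_num)
    have : (7/10 : ℝ) • z + (3/10 : ℝ) • v = AffineMap.homothety z (3/10 : ℝ) v := by
      simp [AffineMap.homothety_apply]; module
    rwa [this] at h
  have hScomp : IsCompact S := hVcomp.image (AffineMap.homothety_continuous z (3/10 : ℝ))
  have hSmeas : MeasurableSet S := hScomp.measurableSet
  have hvolS : volume S = ENNReal.ofReal (27/1000) * volume V := by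
    rw [hSdef, Measure.addHaar_image_homothety]
    norm_num [abs_of_nonneg]
  -- pointwise bound on S
  have hpt : ∀ x ∈ S, (4/25 : ℝ) * r ^ 2 ≤ f x := by
    rintro x ⟨v, hv, rfl⟩
    set u : E3 := z - y with hu
    set w : E3 := v - y with hw
    have hxy : AffineMap.homothety z (3/10 : ℝ) v - y = (7/10 : ℝ) • u + (3/10 : ℝ) • w := by
      simp [AffineMap.homothety_apply, hu, hw]; module
    have hxy' : AffineMap.homothety z (3/10 : ℝ) v - y' = (3/10 : ℝ) • u + (3/10 : ℝ) • w := by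
      simp [AffineMap.homothety_apply, hy'def, hu, hw]; module
    have hnu : ‖u‖ = r := by rw [hu, ← dist_eq_norm]; exact hzr
    have hnw : ‖w‖ ≤ r := by rw [hw, ← dist_eq_norm]; exact hler v hv
    have hnw0 : (0:ℝ) ≤ ‖w‖ := norm_nonneg _
    have hinner : |⟪u, w⟫| ≤ ‖u‖ * ‖w‖ := abs_real_inner_le_norm u w
    have hd1 : dist (AffineMap.homothety z (3/10 : ℝ) v) y ^ 2 =
        (7/10:ℝ) ^ 2 * ‖u‖ ^ 2 + 2 * ((7/10:ℝ) * (3/10)) * ⟪u, w⟫ + (3/10:ℝ) ^ 2 * ‖w‖ ^ 2 := by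
      rw [dist_eq_norm, hxy, aux_norm_smul_add_sq]
    have hd2 : dist (AffineMap.homothety z (3/10 : ℝ) v) y' ^ 2 =
        (3/10:ℝ) ^ 2 * ‖u‖ ^ 2 + 2 * ((3/10:ℝ) * (3/10)) * ⟪u, w⟫ + (3/10:ℝ) ^ 2 * ‖w‖ ^ 2 := by
      rw [dist_eq_norm, hxy', aux_norm_smul_add_sq]
    have hmin : min (dist (AffineMap.homothety z (3/10 : ℝ) v) y)
        (dist (AffineMap.homothety z (3/10 : ℝ) v) y') ^ 2 ≤
        dist (AffineMap.homothety z (3/10 : ℝ) v) y' ^ 2 := by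
      have h2 : 0 ≤ min (dist (AffineMap.homothety z (3/10 : ℝ) v) y)
          (dist (AffineMap.homothety z (3/10 : ℝ) v) y') := le_min dist_nonneg dist_nonneg
      exact pow_le_pow_left₀ h2 (min_le_right _ _) 2
    have hge : f (AffineMap.homothety z (3/10 : ℝ) v) ≥
        dist (AffineMap.homothety z (3/10 : ℝ) v) y ^ 2 -
        dist (AffineMap.homothety z (3/10 : ℝ) v) y' ^ 2 := by
      simp only [hfdef]
      linarith [hmin]
    have habs := abs_le.mp hinner
    nlinarith [hge, hd1, hd2, habs.1, hnu, hnw, hnw0]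
  -- integrability
  have hfcont : Continuous f := by
    apply Continuous.sub
    · exact (continuous_id.dist continuous_const).pow 2
    · exact ((continuous_id.dist continuous_const).min (continuous_id.dist continuous_const)).pow 2
  have hintV : IntegrableOn f V volume := hfcont.continuousOn.integrableOn_compact hVcomp
  have hintS : IntegrableOn f S volume := hintV.mono_set hSsub
  have hSfin : volume S ≠ ⊤ := hScomp.measure_lt_top.ne
  have step1 : (4/25 : ℝ) * r ^ 2 * (volume S).toReal ≤ ∫ x in S, f x :=
    setIntegral_ge_of_const_le_real hSmeas hSfin hpt hintS
  have step2 : (∫ x in S, f x) ≤ ∫ x in V, f x := by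
    apply setIntegral_mono_set hintV
    · exact Filter.Eventually.of_forall hf0
    · exact Filter.Eventually.of_forall hSsub
  have hvolVfin : volume V ≠ ⊤ := hVcomp.measure_lt_top.ne
  have htoReal : (volume S).toReal = (27/1000) * (volume V).toReal := by
    rw [hvolS, ENNReal.toReal_mul, ENNReal.toReal_ofReal (by norm_num : (0:ℝ) ≤ 27/1000)]
  have : ((2 ^ 2 * 3 ^ 3 : ℝ) / (5 ^ 2 * 10 ^ 3)) * r ^ 2 * (volume V).toReal =
      (4/25 : ℝ) * r ^ 2 * (volume S).toReal := by
    rw [htoReal]; ring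
  rw [ge_iff_le, this]
  exact step1.trans step2
end
end

section
/- Let n ≥ 2 and let Y_n be a minimizer of the quantization energy among subsets of Q with n points. Then for every y ∈ Y_n, with V its Voronoi cell and r := max_{z ∈ V} |z − y|, one has min_{z ∈ Y_n, z ≠ y} |y − z| ≥ r·(√(1 + 2⁴·3³/(5²·10³)) − 1) ≥ Γ₂ · |V|^{1/3}, where Γ₂ := (√(1 + 2⁴·3³/(5²·10³)) − 1)·ω₃^{−1/3}. -/
set_option maxHeartbeats 1000000


open MeasureTheory

noncomputable section

/-- The closed unit cube Q = [0,1]³. -/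
def Qcube : Set E3 := {x | ∀ i, x i ∈ Set.Icc (0 : ℝ) 1}

/-- The quantization energy E(Y) = ∫_Q dist(x,Y)² dx. -/
def quantE (Y : Finset E3) : ℝ := ∫ x in Qcube, (Metric.infDist x (↑Y : Set E3)) ^ 2

/-- The Voronoi cell of a generator y ∈ Y, relative to Q. -/
def vorCell (Y : Finset E3) (y : E3) : Set E3 :=
  {x ∈ Qcube | ∀ z ∈ Y, dist x y ≤ dist x z}

/-- Y is a minimizer of the quantization energy among n-point subsets of Q. -/
def IsMinimizer (n : ℕ) (Y : Finset E3) : Prop :=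
  (↑Y : Set E3) ⊆ Qcube ∧ Y.card = n ∧
    ∀ Z : Finset E3, (↑Z : Set E3) ⊆ Qcube → Z.card = n → quantE Y ≤ quantE Z

/-- ω₃ = 4π/3, the volume of the unit ball in ℝ³. -/
def omega3 : ℝ := 4 * Real.pi / 3

/-- Γ₁ = (2/5)^{2/3} / 40. -/
def Gamma1 : ℝ := ((2 / 5 : ℝ) ^ ((2 : ℝ) / 3)) / 40

/-- Γ₃ = ω₃^{-1/5} Γ₁^{1/5}. -/
def Gamma3 : ℝ := omega3 ^ (-(1 : ℝ) / 5) * Gamma1 ^ ((1 : ℝ) / 5)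

/-- Γ₅ = (1/4)(√(1 + 2⁴·3³/(5²·10³)) − 1) Γ₃. -/
def Gamma5 : ℝ :=
  (1 / 4) * (Real.sqrt (1 + (2 ^ 4 * 3 ^ 3 : ℝ) / (5 ^ 2 * 10 ^ 3)) - 1) * Gamma3

/-- Γ₄, the diameter upper-bound constant. -/
def Gamma4 : ℝ :=
  (2 * (12 : ℝ) ^ ((1 : ℝ) / 4) * (16 : ℝ) ^ ((1 : ℝ) / 3) /
      (Real.pi ^ ((1 : ℝ) / 4) * omega3 ^ ((1 : ℝ) / 12))) *
    (Real.sqrt (1 + (2 ^ 4 * 3 ^ 3 : ℝ) / (5 ^ 2 * 10 ^ 3)) - 1) ^ (-(1 : ℝ) / 2) *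
    ((5 ^ 2 * 10 ^ 3 : ℝ) / (2 ^ 2 * 3 ^ 3)) ^ ((1 : ℝ) / 4)

/-! ### Auxiliary lemmas -/

section Aux

local instance : DecidableEq E3 := Classical.decEq _

lemma qcube_closed : IsClosed Qcube := by
  have : Qcube = ⋂ i, (fun x : E3 => x i) ⁻¹' Set.Icc (0:ℝ) 1 := by
    ext x; simp [Qcube, Set.mem_iInter]
  rw [this]
  exact isClosed_iInter fun i => isClosed_Icc.preimage (EuclideanSpace.proj i).continuous

lemma qcube_sub_ball : Qcube ⊆ Metric.closedBall 0 2 := by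
  intro x hx
  rw [Metric.mem_closedBall, dist_zero_right]
  have h : ‖x‖ = Real.sqrt (∑ i, ‖x i‖ ^ 2) := by
    simpa using EuclideanSpace.norm_eq x
  rw [h]
  have h2 : (∑ i, ‖x i‖ ^ 2) ≤ 3 := by
    rw [Fin.sum_univ_three]
    have e : ∀ t : ℝ, 0 ≤ t → t ≤ 1 → ‖t‖^2 ≤ 1 := by
      intro t h0 h1; rw [Real.norm_eq_abs, sq_abs]; nlinarith
    nlinarith [e _ (hx 0).1 (hx 0).2, e _ (hx 1).1 (hx 1).2, e _ (hx 2).1 (hx 2).2]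
  calc Real.sqrt (∑ i, ‖x i‖ ^ 2) ≤ Real.sqrt 4 := Real.sqrt_le_sqrt (by linarith)
  _ = 2 := by rw [show (4:ℝ) = 2^2 by norm_num, Real.sqrt_sq (by norm_num)]

lemma qcube_compact : IsCompact Qcube :=
  Metric.isCompact_of_isClosed_isBounded qcube_closed
    (Metric.isBounded_closedBall.subset qcube_sub_ball)

/-- integrability of continuous functions on subsets of the ball of radius 2. -/
lemma integrableOn_cont {F : Type*} [NormedAddCommGroup F] [NormedSpace ℝ F]
    {f : E3 → F} (hf : Continuous f) {s : Set E3} (hs : s ⊆ Metric.closedBall 0 2) :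
    IntegrableOn f s :=
  (hf.continuousOn.integrableOn_compact (isCompact_closedBall 0 2)).mono_set hs

lemma gamma52 : Real.Gamma ((3:ℝ) / 2 + 1) = 3 / 4 * Real.sqrt Real.pi := by
  rw [Real.Gamma_add_one (by norm_num)]
  have : (3:ℝ)/2 = 1/2 + 1 := by norm_num
  rw [this, Real.Gamma_add_one (by norm_num), Real.Gamma_one_half_eq]
  ring

lemma volume_ball3 (x : E3) (R : ℝ) (hR : 0 ≤ R) :
    (volume (Metric.closedBall x R)).toReal = omega3 * R ^ 3 := by
  rw [EuclideanSpace.volume_closedBall]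
  have hc : (Fintype.card (Fin 3)) = 3 := by simp
  rw [hc]
  have h1 : Real.sqrt Real.pi ^ 3 / Real.Gamma ((3:ℕ) / 2 + 1) = omega3 := by
    push_cast
    rw [gamma52]
    have hs : Real.sqrt Real.pi ^ 3 = Real.pi * Real.sqrt Real.pi := by
      rw [pow_succ, Real.sq_sqrt Real.pi_pos.le]
    rw [hs, omega3]
    have : Real.sqrt Real.pi > 0 := Real.sqrt_pos.mpr Real.pi_pos
    field_simp
  rw [h1]
  rw [ENNReal.toReal_mul, ENNReal.toReal_pow, ENNReal.toReal_ofReal hR,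
    ENNReal.toReal_ofReal (by rw [omega3]; positivity)]
  ring

lemma volume_ball3_le (x : E3) (R : ℝ) (hR : 0 ≤ R) {s : Set E3}
    (hs : s ⊆ Metric.closedBall x R) : (volume s).toReal ≤ omega3 * R ^ 3 := by
  rw [← volume_ball3 x R hR]
  exact ENNReal.toReal_mono (measure_closedBall_lt_top).ne (measure_mono hs)

lemma volume_box (a : Fin 3 → ℝ) (l : ℝ) (hl : 0 ≤ l) :
    volume {x : E3 | ∀ i, x i ∈ Set.Icc (a i) (a i + l)} = ENNReal.ofReal (l ^ 3) := by
  have key := (EuclideanSpace.volume_preserving_symm_measurableEquiv_toLp (Fin 3)).measure_preimage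
    (s := Set.pi Set.univ fun i => Set.Icc (a i) (a i + l))
    (MeasurableSet.univ_pi fun i => measurableSet_Icc).nullMeasurableSet
  have heq : (MeasurableEquiv.toLp 2 (Fin 3 → ℝ)).symm ⁻¹'
      (Set.pi Set.univ fun i => Set.Icc (a i) (a i + l)) =
      {x : E3 | ∀ i, x i ∈ Set.Icc (a i) (a i + l)} := by
    ext x
    simp only [Set.mem_preimage, Set.mem_pi, Set.mem_univ, forall_true_left, Set.mem_setOf_eq,
      Set.mem_Icc]
    constructor
    · intro h i; exact h i
    · intro h i; exact h i
  rw [heq] at key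
  rw [key, volume_pi_pi]
  simp only [Real.volume_Icc, add_sub_cancel_left]
  rw [Finset.prod_const, ← ENNReal.ofReal_pow hl]
  simp

lemma vorCell_subset (Y : Finset E3) (y : E3) : vorCell Y y ⊆ Qcube := fun _ h => h.1

lemma vorCell_closed (Y : Finset E3) (y : E3) : IsClosed (vorCell Y y) := by
  have : vorCell Y y = Qcube ∩ ⋂ z ∈ Y, {x : E3 | dist x y ≤ dist x z} := by
    ext x
    simp only [vorCell, Set.mem_setOf_eq, Set.mem_inter_iff, Set.mem_iInter]
  rw [this]
  exact qcube_closed.inter (isClosed_biInter fun z _ =>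
    isClosed_le (continuous_id.dist continuous_const) (continuous_id.dist continuous_const))

lemma infDist_vor {Y : Finset E3} {y x : E3} (hyY : y ∈ Y) (hx : x ∈ vorCell Y y) :
    Metric.infDist x (↑Y : Set E3) = dist x y := by
  apply le_antisymm (Metric.infDist_le_dist_of_mem (by exact_mod_cast hyY))
  obtain ⟨w, hwY, hw⟩ := (Y.finite_toSet.isCompact).exists_infDist_eq_dist
    ⟨y, by exact_mod_cast hyY⟩ x
  rw [hw]
  exact hx.2 w (by exact_mod_cast hwY)

lemma exists_closest_ne {Y : Finset E3} {y x : E3} (hyY : y ∈ Y)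
    (hxQ : x ∈ Qcube) (hxV : x ∉ vorCell Y y) :
    ∃ w ∈ Y, w ≠ y ∧ Metric.infDist x (↑Y : Set E3) = dist x w := by
  obtain ⟨w, hwY, hw⟩ := (Y.finite_toSet.isCompact).exists_infDist_eq_dist
    ⟨y, by exact_mod_cast hyY⟩ x
  refine ⟨w, by exact_mod_cast hwY, ?_, hw⟩
  rintro rfl
  exact hxV ⟨hxQ, fun z hz => hw ▸ Metric.infDist_le_dist_of_mem (by exact_mod_cast hz)⟩

lemma infDist_insert_erase_le {Y : Finset E3} {y x : E3} (hyY : y ∈ Y) (w : E3)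
    (hxQ : x ∈ Qcube) (hxV : x ∉ vorCell Y y) :
    Metric.infDist x (↑(insert w (Y.erase y)) : Set E3) ≤ Metric.infDist x (↑Y : Set E3) := by
  obtain ⟨u, huY, huy, hu⟩ := exists_closest_ne hyY hxQ hxV
  rw [hu]
  exact Metric.infDist_le_dist_of_mem
    (by exact_mod_cast Finset.mem_insert_of_mem (Finset.mem_erase.mpr ⟨huy, huY⟩))

lemma eps_nonneg : 0 ≤ Real.sqrt (1 + (2 ^ 4 * 3 ^ 3 : ℝ) / (5 ^ 2 * 10 ^ 3)) - 1 := by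
  nlinarith [Real.sqrt_le_sqrt (by norm_num : (1:ℝ) ≤ 1 + (2 ^ 4 * 3 ^ 3 : ℝ) / (5 ^ 2 * 10 ^ 3)),
    Real.sqrt_one]

lemma eps_le : Real.sqrt (1 + (2 ^ 4 * 3 ^ 3 : ℝ) / (5 ^ 2 * 10 ^ 3)) - 1 ≤ 87 / 10000 := by
  have h : Real.sqrt (1 + (2 ^ 4 * 3 ^ 3 : ℝ) / (5 ^ 2 * 10 ^ 3)) ≤ 10087/10000 := by
    rw [show (10087/10000 : ℝ) = Real.sqrt ((10087/10000)^2) by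
      rw [Real.sqrt_sq (by norm_num)]]
    exact Real.sqrt_le_sqrt (by norm_num)
  linarith

lemma sqrt3_lb : 17/10 ≤ Real.sqrt 3 := by
  rw [show (17/10 : ℝ) = Real.sqrt ((17/10)^2) by rw [Real.sqrt_sq (by norm_num)]]
  exact Real.sqrt_le_sqrt (by norm_num)

lemma sqrt3_ub : Real.sqrt 3 ≤ 7/4 := by
  rw [show (7/4 : ℝ) = Real.sqrt ((7/4)^2) by rw [Real.sqrt_sq (by norm_num)]]
  exact Real.sqrt_le_sqrt (by norm_num)

/-- First-order optimality: each generator of a minimizer is the centroid of its cell. -/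
lemma vor_centroid {n : ℕ} {Y : Finset E3} (hY : IsMinimizer n Y) {y : E3} (hyY : y ∈ Y) :
    (∫ x in vorCell Y y, (x - y)) = (0 : E3) := by
  obtain ⟨hYQ, hYcard, hmin⟩ := hY
  set V := vorCell Y y with hVdef
  by_contra hb0
  have hVm : MeasurableSet V := (vorCell_closed Y y).measurableSet
  have hVsub2 : V ⊆ Metric.closedBall 0 2 := (vorCell_subset Y y).trans qcube_sub_ball
  have hint : IntegrableOn (fun x : E3 => x - y) V :=
    integrableOn_cont (continuous_id.sub continuous_const) hVsub2
  set b : E3 := ∫ x in V, (x - y) with hbdef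
  have hVfin : volume V ≠ ⊤ := ((measure_mono hVsub2).trans_lt measure_closedBall_lt_top).ne
  have hV0 : volume V ≠ 0 := by
    intro h
    exact hb0 (by rw [hbdef, Measure.restrict_eq_zero.mpr h, integral_zero_measure])
  set m := (volume V).toReal with hmdef
  have hmpos : 0 < m := ENNReal.toReal_pos hV0 hVfin
  have hyQ : y ∈ Qcube := hYQ (by exact_mod_cast hyY)
  -- coordinate description of b
  have hproj : ∀ i : Fin 3, b i = ∫ x in V, (x i - y i) := by
    intro i
    have h := (EuclideanSpace.proj (𝕜 := ℝ) i).integral_comp_comm hint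
    have h2 : (EuclideanSpace.proj (𝕜 := ℝ) i) b = b i := rfl
    rw [← h2, ← h]
    congr 1
  -- coordinate bounds
  have hble : ∀ i, b i ≤ m * (1 - y i) := by
    intro i
    rw [hproj i]
    have step : (∫ x in V, (x i - y i)) ≤ ∫ _x in V, (1 - y i) := by
      apply setIntegral_mono_on
      · exact integrableOn_cont (((EuclideanSpace.proj (𝕜 := ℝ) i).continuous).sub
          continuous_const) hVsub2
      · exact integrableOn_const hVfin
      · exact hVm
      · intro x hx
        have := (hx.1 i).2
        simp only
        linarith
    rw [setIntegral_const, smul_eq_mul, measureReal_def, ← hmdef] at step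
    exact step
  have hbge : ∀ i, -(m * y i) ≤ b i := by
    intro i
    rw [hproj i]
    have step : (∫ _x in V, (0 - y i)) ≤ ∫ x in V, (x i - y i) := by
      apply setIntegral_mono_on
      · exact integrableOn_const hVfin
      · exact integrableOn_cont (((EuclideanSpace.proj (𝕜 := ℝ) i).continuous).sub
          continuous_const) hVsub2
      · exact hVm
      · intro x hx
        have := (hx.1 i).1
        simp only
        linarith
    rw [setIntegral_const, smul_eq_mul, measureReal_def, ← hmdef] at step
    linarith [step]
  -- choose a good τ
  have hbinj : Function.Injective (fun τ : ℝ => y + τ • b) := by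
    intro τ1 τ2 h
    simp only [add_right_inj] at h
    by_contra hne
    have : (τ1 - τ2) • b = 0 := by rw [sub_smul, h, sub_self]
    rcases smul_eq_zero.mp this with h' | h'
    · exact hne (by linarith [sub_eq_zero.mp h'])
    · exact hb0 h'
  have hbad : Set.Finite {τ : ℝ | y + τ • b ∈ (↑Y : Set E3)} :=
    Set.Finite.preimage hbinj.injOn Y.finite_toSet
  obtain ⟨τ, hτmem, hτbad⟩ :=
    (((Set.Ioc_infinite (by positivity : (0:ℝ) < 1/m))).diff hbad).nonempty
  obtain ⟨hτpos, hτle⟩ := hτmem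
  have hτm : τ * m ≤ 1 := by
    rw [le_div_iff₀ hmpos] at hτle
    linarith
  set w : E3 := τ • b with hwdef
  set y' : E3 := y + w with hy'def
  have hy'Q : y' ∈ Qcube := by
    intro i
    have h1 : y' i = y i + τ * b i := by
      simp [hy'def, hwdef]
    rw [h1]
    have h0 : 0 ≤ y i := (hyQ i).1
    have h1' : y i ≤ 1 := (hyQ i).2
    constructor
    · nlinarith [hbge i, hτpos]
    · nlinarith [hble i, hτpos]
  have hy'Y : y' ∉ (↑Y : Set E3) := hτbad
  have hy'E : y' ∉ Y.erase y := fun h => hy'Y (by exact_mod_cast Finset.mem_of_mem_erase h)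
  set Z : Finset E3 := insert y' (Y.erase y) with hZdef
  have hZQ : (↑Z : Set E3) ⊆ Qcube := by
    intro u hu
    simp only [hZdef, Finset.coe_insert, Set.mem_insert_iff] at hu
    rcases hu with rfl | hu
    · exact hy'Q
    · exact hYQ (by exact_mod_cast Finset.mem_of_mem_erase (by exact_mod_cast hu))
  have hZcard : Z.card = n := by
    rw [hZdef, Finset.card_insert_of_notMem hy'E, Finset.card_erase_of_mem hyY]
    have : 1 ≤ Y.card := Finset.card_pos.mpr ⟨y, hyY⟩
    omega
  have hcomp : quantE Y ≤ quantE Z := hmin Z hZQ hZcard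
  -- pointwise comparison
  set f : E3 → ℝ := fun x => Metric.infDist x (↑Y : Set E3) with hfdef
  set g : E3 → ℝ := fun x => Metric.infDist x (↑Z : Set E3) with hgdef
  set q : E3 → ℝ := fun x => ‖w‖^2 - 2 * (inner ℝ w (x - y) : ℝ) with hqdef
  have hpoint : ∀ x ∈ Qcube, g x ^ 2 ≤ f x ^ 2 + V.indicator q x := by
    intro x hxQ
    by_cases hxV : x ∈ V
    · rw [Set.indicator_of_mem hxV]
      have hf : f x = dist x y := infDist_vor hyY hxV
      have hg : g x ≤ dist x y' :=
        Metric.infDist_le_dist_of_mem (by exact_mod_cast Finset.mem_insert_self y' (Y.erase y))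
      have hdy' : dist x y' ^ 2 = dist x y ^ 2 + q x := by
        rw [dist_eq_norm, dist_eq_norm, hy'def, hqdef]
        have : x - (y + w) = (x - y) - w := by abel
        rw [this, norm_sub_sq_real (x - y) w]
        simp only [real_inner_comm (x - y) w]
        ring
      have hg0 : 0 ≤ g x := Metric.infDist_nonneg
      calc g x ^ 2 ≤ dist x y' ^ 2 := pow_le_pow_left₀ hg0 hg 2
      _ = f x ^ 2 + q x := by rw [hdy', hf]
    · rw [Set.indicator_of_notMem hxV, add_zero]
      have hle : g x ≤ f x := infDist_insert_erase_le hyY y' hxQ hxV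
      have hg0 : 0 ≤ g x := Metric.infDist_nonneg
      exact pow_le_pow_left₀ hg0 hle 2
  -- integrate
  have hfInt : IntegrableOn (fun x => f x ^ 2) Qcube :=
    integrableOn_cont ((Metric.continuous_infDist_pt _).pow 2) qcube_sub_ball
  have hgInt : IntegrableOn (fun x => g x ^ 2) Qcube :=
    integrableOn_cont ((Metric.continuous_infDist_pt _).pow 2) qcube_sub_ball
  have hic : Continuous fun x : E3 => (inner ℝ w (x - y) : ℝ) :=
    continuous_const.inner (continuous_id.sub continuous_const)
  have hqcont : Continuous q := by
    rw [hqdef]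
    exact continuous_const.sub (continuous_const.mul hic)
  have hindInt : IntegrableOn (fun x => V.indicator q x) Qcube :=
    ((integrableOn_cont hqcont hVsub2).integrable_indicator hVm).integrableOn
  have hmono : quantE Z ≤ quantE Y + ∫ x in Qcube, V.indicator q x := by
    have h1 : quantE Z ≤ ∫ x in Qcube, (f x ^ 2 + V.indicator q x) := by
      apply setIntegral_mono_on hgInt (hfInt.add hindInt) qcube_closed.measurableSet
      intro x hx
      exact hpoint x hx
    rw [integral_add hfInt hindInt] at h1
    exact h1
  have hindval : (∫ x in Qcube, V.indicator q x) = m * ‖w‖^2 - 2 * (τ * ‖b‖^2) := by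
    rw [setIntegral_indicator hVm,
      Set.inter_eq_self_of_subset_right (vorCell_subset Y y)]
    have hc1 : IntegrableOn (fun x : E3 => (inner ℝ w (x - y) : ℝ)) V :=
      integrableOn_cont hic hVsub2
    have hsplit : (∫ x in V, q x) =
        (∫ _x in V, ‖w‖^2) - 2 * ∫ x in V, (inner ℝ w (x - y) : ℝ) := by
      rw [hqdef]
      rw [integral_sub (integrableOn_const (C := ‖w‖^2) hVfin) (hc1.const_mul 2)]
      rw [integral_const_mul]
    rw [hsplit, setIntegral_const, smul_eq_mul, measureReal_def]
    have hinner : (∫ x in V, (inner ℝ w (x - y) : ℝ)) = (inner ℝ w b : ℝ) := by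
      exact integral_inner hint w
    rw [hinner, hwdef, real_inner_smul_left, real_inner_self_eq_norm_sq]
  have hwn : ‖w‖^2 = τ^2 * ‖b‖^2 := by
    rw [hwdef, norm_smul, mul_pow, Real.norm_eq_abs, sq_abs]
  have hfinal : 0 ≤ m * (τ^2 * ‖b‖^2) - 2 * (τ * ‖b‖^2) := by
    rw [hindval, hwn] at hmono
    linarith [hcomp, hmono]
  have hbsq : ‖b‖^2 ≤ 0 := by
    by_contra hB
    push_neg at hB
    have h1 : m * (τ^2 * ‖b‖^2) ≤ τ * ‖b‖^2 := by
      have h2 : (τ * m) * (τ * ‖b‖^2) ≤ 1 * (τ * ‖b‖^2) :=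
        mul_le_mul_of_nonneg_right hτm (mul_pos hτpos hB).le
      nlinarith [h2]
    nlinarith [mul_pos hτpos hB, h1, hfinal]
  have hb' : ‖b‖ = 0 := le_antisymm (by nlinarith [norm_nonneg b]) (norm_nonneg b)
  exact hb0 (norm_eq_zero.mp hb')

end Aux

lemma final_numeric {d r s3 om : ℝ} (hd0 : 0 ≤ d) (hrpos : 0 < r)
    (hs3lb : 17/10 ≤ s3) (hs3ub : s3 ≤ 7/4) (homle : om ≤ 21/5) (hom0 : 0 ≤ om)
    (hdle : d ≤ (87/10000)*r)
    (hmaster : (0:ℝ) ≤ 3*s3*r^3/512 * (3*r^2/4 - r^2) +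
      (d^2 * (om * r^3) + 2*(d*(r*(3*s3*r^3/512))))) : False := by
  have hd2 : d^2 ≤ (87/10000) * r * d := by nlinarith
  have hr3 : (0:ℝ) < r^3 := by positivity
  have hdr4 : (0:ℝ) ≤ d*r^4 := by positivity
  have hterm1 : 3*s3*r^3/512 * (3*r^2/4 - r^2) ≤ -(51/20480)*r^5 := by
    have h1 : (17/10)*r^5 ≤ s3*r^5 := mul_le_mul_of_nonneg_right hs3lb (by positivity)
    nlinarith [h1]
  have hterm3 : 2*(d*(r*(3*s3*r^3/512))) ≤ (21/1024)*(d*r^4) := by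
    have h1 : s3*(d*r^4) ≤ (7/4)*(d*r^4) := mul_le_mul_of_nonneg_right hs3ub hdr4
    nlinarith [h1]
  have hterm2 : d^2*(om*r^3) ≤ (1827/50000)*(d*r^4) := by
    have h5 : om*(d^2*r^3) ≤ (21/5)*(d^2*r^3) :=
      mul_le_mul_of_nonneg_right homle (by positivity)
    have h6 : d^2*r^3 ≤ (87/10000)*(d*r^4) := by
      nlinarith [mul_le_mul_of_nonneg_right hd2 hr3.le]
    nlinarith [h5, h6]
  have hdr5 : d*r^4 ≤ (87/10000)*r^5 := by
    have h1 := mul_le_mul_of_nonneg_right hdle (by positivity : (0:ℝ) ≤ r^4)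
    nlinarith [h1]
  have hr5 : (0:ℝ) < r^5 := by positivity
  linarith

lemma qcube_dist_le {x y : E3} (hx : x ∈ Qcube) (hy : y ∈ Qcube) : dist x y ≤ 7/4 := by
  rw [EuclideanSpace.dist_eq]
  have hbound : ∀ i : Fin 3, dist (x i) (y i) ^ 2 ≤ 1 := by
    intro i
    have h1 := hx i; have h2 := hy i
    simp only [Set.mem_Icc] at h1 h2
    rw [Real.dist_eq, sq_abs]
    nlinarith [h1.1, h1.2, h2.1, h2.2]
  calc Real.sqrt (∑ i, dist (x i) (y i) ^ 2) ≤ Real.sqrt 3 := by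
        apply Real.sqrt_le_sqrt
        rw [Fin.sum_univ_three]
        linarith [hbound 0, hbound 1, hbound 2]
  _ ≤ 7/4 := sqrt3_ub

theorem stmt_2 (n : ℕ) (hn : 2 ≤ n) (Y : Finset E3) (hY : IsMinimizer n Y)
    (y : E3) (hyY : y ∈ Y) (r : ℝ)
    (hr : IsGreatest ((fun z => dist z y) '' vorCell Y y) r) :
    (∀ z ∈ Y, z ≠ y →
        dist y z ≥ r * (Real.sqrt (1 + (2 ^ 4 * 3 ^ 3 : ℝ) / (5 ^ 2 * 10 ^ 3)) - 1)) ∧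
      r * (Real.sqrt (1 + (2 ^ 4 * 3 ^ 3 : ℝ) / (5 ^ 2 * 10 ^ 3)) - 1) ≥
        (Real.sqrt (1 + (2 ^ 4 * 3 ^ 3 : ℝ) / (5 ^ 2 * 10 ^ 3)) - 1) * omega3 ^ (-(1 : ℝ) / 3) *
          (volume (vorCell Y y)).toReal ^ ((1 : ℝ) / 3) := by
  classical
  obtain ⟨hYQ, hYcard, hmin⟩ := hY
  have hyQ : y ∈ Qcube := hYQ (by exact_mod_cast hyY)
  obtain ⟨⟨x₀, hx₀V, hx₀r⟩, hub'⟩ := hr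
  simp only at hx₀r
  have hub : ∀ x ∈ vorCell Y y, dist x y ≤ r := fun x hx =>
    hub' (Set.mem_image_of_mem _ hx)
  have hr0 : 0 ≤ r := hx₀r ▸ dist_nonneg
  set eps := Real.sqrt (1 + (2 ^ 4 * 3 ^ 3 : ℝ) / (5 ^ 2 * 10 ^ 3)) - 1 with hepsdef
  have heps0 : 0 ≤ eps := eps_nonneg
  have hepsle : eps ≤ 87/10000 := eps_le
  have hVsub : vorCell Y y ⊆ Metric.closedBall y r := by
    intro x hx
    exact Metric.mem_closedBall.mpr (hub x hx)
  have hom : (0:ℝ) < omega3 := by rw [omega3]; positivity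
  -- second conjunct
  have hconj2 : r * eps ≥
      eps * omega3 ^ (-(1 : ℝ) / 3) * (volume (vorCell Y y)).toReal ^ ((1 : ℝ) / 3) := by
    have hvol : (volume (vorCell Y y)).toReal ≤ omega3 * r ^ 3 := volume_ball3_le y r hr0 hVsub
    have h1 : (volume (vorCell Y y)).toReal ^ ((1:ℝ)/3) ≤ (omega3 * r^3) ^ ((1:ℝ)/3) :=
      Real.rpow_le_rpow ENNReal.toReal_nonneg hvol (by norm_num)
    have h2 : (omega3 * r^3) ^ ((1:ℝ)/3) = omega3 ^ ((1:ℝ)/3) * r := by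
      rw [Real.mul_rpow hom.le (by positivity)]
      congr 1
      rw [← Real.rpow_natCast r 3, ← Real.rpow_mul hr0]
      norm_num
    have h3 : omega3 ^ (-(1:ℝ)/3) * (volume (vorCell Y y)).toReal ^ ((1:ℝ)/3) ≤ r := by
      have hom3 : (0:ℝ) < omega3 ^ ((1:ℝ)/3) := Real.rpow_pos_of_pos hom _
      have hom3' : omega3 ^ (-(1:ℝ)/3) = (omega3 ^ ((1:ℝ)/3))⁻¹ := by
        rw [← Real.rpow_neg hom.le]
        norm_num
      rw [hom3', inv_mul_le_iff₀ hom3]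
      rw [h2] at h1
      exact h1
    calc eps * omega3 ^ (-(1:ℝ)/3) * (volume (vorCell Y y)).toReal ^ ((1:ℝ)/3)
        = eps * (omega3 ^ (-(1:ℝ)/3) * (volume (vorCell Y y)).toReal ^ ((1:ℝ)/3)) := by ring
    _ ≤ eps * r := mul_le_mul_of_nonneg_left h3 heps0
    _ = r * eps := mul_comm _ _
  refine ⟨?_, hconj2⟩
  intro z hzY hzy
  by_contra hcon
  push_neg at hcon
  -- hcon : dist y z < r * eps
  set d := dist y z with hddef
  have hd0 : 0 ≤ d := dist_nonneg
  have hrpos : 0 < r := by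
    by_contra hr'
    push_neg at hr'
    have hre : r = 0 := le_antisymm hr' hr0
    rw [hre, zero_mul] at hcon
    exact absurd hcon (not_lt.mpr dist_nonneg)
  have hx₀Q : x₀ ∈ Qcube := hx₀V.1
  have hrle : r ≤ 7/4 := by
    rw [← hx₀r]
    exact qcube_dist_le hx₀Q hyQ
  set s3 := Real.sqrt 3 with hs3def
  have hs3sq : s3^2 = 3 := Real.sq_sqrt (by norm_num)
  have hs3lb : 17/10 ≤ s3 := sqrt3_lb
  have hs3ub : s3 ≤ 7/4 := sqrt3_ub
  set l := s3 * r / 8 with hldef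
  have hl0 : 0 < l := by
    rw [hldef]
    positivity -- s3 > 0 needed
  have hlhalf : l ≤ 1/2 := by
    rw [hldef]
    nlinarith
  -- x₀ is not in Y
  have hx₀Y : x₀ ∉ Y := by
    intro h
    have h2 := hx₀V.2 x₀ h
    rw [dist_self] at h2
    have : r ≤ 0 := hx₀r ▸ h2
    linarith
  -- the box O
  set a : Fin 3 → ℝ := fun i => if x₀ i + l ≤ 1 then x₀ i else x₀ i - l with hadef
  set O : Set E3 := {x : E3 | ∀ i, x i ∈ Set.Icc (a i) (a i + l)} with hOdef
  have hx₀a : ∀ i, x₀ i ∈ Set.Icc (a i) (a i + l) := by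
    intro i
    rw [hadef]
    simp only
    split_ifs with h
    · exact ⟨le_refl _, by linarith⟩
    · exact ⟨by linarith, by linarith⟩
  have hOQ : O ⊆ Qcube := by
    intro x hx i
    have hxi := hx i
    have h0 : 0 ≤ x₀ i := (hx₀Q i).1
    have h1 : x₀ i ≤ 1 := (hx₀Q i).2
    simp only [Set.mem_Icc] at hxi ⊢
    rw [hadef] at hxi
    simp only at hxi
    split_ifs at hxi with h
    · exact ⟨by linarith [hxi.1], by linarith [hxi.2]⟩
    · push_neg at h
      exact ⟨by linarith [hxi.1], by linarith [hxi.2]⟩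
  have hOdist : ∀ x ∈ O, dist x x₀ ≤ s3 * l := by
    intro x hx
    rw [EuclideanSpace.dist_eq]
    have hbound : ∀ i : Fin 3, dist (x i) (x₀ i) ^ 2 ≤ l^2 := by
      intro i
      have hxi := hx i
      have hx0i := hx₀a i
      simp only [Set.mem_Icc] at hxi hx0i
      rw [Real.dist_eq, sq_abs]
      nlinarith [hxi.1, hxi.2, hx0i.1, hx0i.2]
    calc Real.sqrt (∑ i, dist (x i) (x₀ i) ^ 2) ≤ Real.sqrt (3 * l^2) := by
          apply Real.sqrt_le_sqrt
          rw [Fin.sum_univ_three]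
          linarith [hbound 0, hbound 1, hbound 2]
    _ = s3 * l := by
        rw [Real.sqrt_mul (by norm_num) (l^2), Real.sqrt_sq hl0.le, hs3def]
  have hs3l : s3 * l ≤ r := by
    rw [hldef]
    nlinarith
  have hOvol : volume O = ENNReal.ofReal (l^3) := volume_box a l hl0.le
  have hOvolr : (volume O).toReal = l^3 := by
    rw [hOvol, ENNReal.toReal_ofReal (by positivity)]
  have hOclosed : IsClosed O := by
    have : O = ⋂ i, (fun x : E3 => x i) ⁻¹' Set.Icc (a i) (a i + l) := by
      ext x
      simp [hOdef, Set.mem_iInter]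
    rw [this]
    exact isClosed_iInter fun i => isClosed_Icc.preimage (EuclideanSpace.proj i).continuous
  have hOm : MeasurableSet O := hOclosed.measurableSet
  set V := vorCell Y y with hVdef
  have hVm : MeasurableSet V := (vorCell_closed Y y).measurableSet
  have hVQ : V ⊆ Qcube := vorCell_subset Y y
  have hVsub2 : V ⊆ Metric.closedBall 0 2 := hVQ.trans qcube_sub_ball
  have hOsub2 : O ⊆ Metric.closedBall 0 2 := hOQ.trans qcube_sub_ball
  -- the competitor
  set Z : Finset E3 := insert x₀ (Y.erase y) with hZdef
  have hx₀E : x₀ ∉ Y.erase y := fun h => hx₀Y (Finset.mem_of_mem_erase h)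
  have hZQ : (↑Z : Set E3) ⊆ Qcube := by
    intro u hu
    simp only [hZdef, Finset.coe_insert, Set.mem_insert_iff] at hu
    rcases hu with rfl | hu
    · exact hx₀Q
    · exact hYQ (by exact_mod_cast Finset.mem_of_mem_erase (by exact_mod_cast hu))
  have hZcard : Z.card = n := by
    rw [hZdef, Finset.card_insert_of_notMem hx₀E, Finset.card_erase_of_mem hyY]
    have : 1 ≤ Y.card := Finset.card_pos.mpr ⟨y, hyY⟩
    omega
  have hfg : quantE Y ≤ quantE Z := hmin Z hZQ hZcard
  set f : E3 → ℝ := fun x => Metric.infDist x (↑Y : Set E3) with hfdef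
  set g : E3 → ℝ := fun x => Metric.infDist x (↑Z : Set E3) with hgdef
  have hfx₀ : f x₀ = r := by
    rw [hfdef]
    simp only
    rw [infDist_vor hyY hx₀V, hx₀r]
  -- the comparison functions
  set p : E3 → ℝ := fun x => 2*r*dist x x₀ - r^2 with hpdef
  set q : E3 → ℝ := fun x => d^2 + 2 * (inner ℝ (x - y) (y - z) : ℝ) with hqdef
  -- pointwise bound
  have hpoint : ∀ x ∈ Qcube, g x ^ 2 - f x ^ 2 ≤ O.indicator p x + (V \ O).indicator q x := by
    intro x hxQ
    by_cases hxO : x ∈ O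
    · rw [Set.indicator_of_mem hxO, Set.indicator_of_notMem (fun h => h.2 hxO)]
      have hs := hOdist x hxO
      have hsr : dist x x₀ ≤ r := hs.trans hs3l
      have hgx : g x ≤ dist x x₀ :=
        Metric.infDist_le_dist_of_mem (by exact_mod_cast Finset.mem_insert_self x₀ (Y.erase y))
      have hfx : r - dist x x₀ ≤ f x := by
        have h : Metric.infDist x₀ (↑Y : Set E3) ≤
            Metric.infDist x (↑Y : Set E3) + dist x₀ x :=
          Metric.infDist_le_infDist_add_dist
        have h2 : f x₀ ≤ f x + dist x x₀ := by
          rw [dist_comm x x₀]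
          exact h
        rw [hfx₀] at h2
        linarith
      have hg0 : 0 ≤ g x := Metric.infDist_nonneg
      have h1 : g x ^ 2 ≤ dist x x₀ ^ 2 := pow_le_pow_left₀ hg0 hgx 2
      have h2 : (r - dist x x₀)^2 ≤ f x ^ 2 := pow_le_pow_left₀ (by linarith) hfx 2
      rw [hpdef]
      simp only
      nlinarith [h1, h2]
    · rw [Set.indicator_of_notMem hxO]
      by_cases hxV : x ∈ V
      · rw [Set.indicator_of_mem (Set.mem_diff_of_mem hxV hxO)]
        have hfx : f x = dist x y := infDist_vor hyY hxV
        have hgx : g x ≤ dist x z := by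
          apply Metric.infDist_le_dist_of_mem
          exact_mod_cast Finset.mem_insert_of_mem (Finset.mem_erase.mpr ⟨hzy, hzY⟩)
        have hg0 : 0 ≤ g x := Metric.infDist_nonneg
        have hid : dist x z ^ 2 = dist x y ^ 2 + q x := by
          rw [dist_eq_norm x z, dist_eq_norm x y, hqdef]
          simp only
          have hxz : x - z = (x - y) + (y - z) := by abel
          rw [hxz, norm_add_sq_real (x - y) (y - z), hddef, dist_eq_norm y z]
          ring
        have h1 : g x ^ 2 ≤ dist x z ^ 2 := pow_le_pow_left₀ hg0 hgx 2
        rw [hid] at h1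
        rw [hfx]
        linarith [h1]
      · rw [Set.indicator_of_notMem (fun h => hxV h.1), add_zero]
        have hle : g x ≤ f x := by convert infDist_insert_erase_le hyY x₀ hxQ hxV
        have hg0 : 0 ≤ g x := Metric.infDist_nonneg
        nlinarith [pow_le_pow_left₀ hg0 hle 2]
  -- integrate the pointwise bound
  have hfInt : IntegrableOn (fun x => f x ^ 2) Qcube :=
    integrableOn_cont ((Metric.continuous_infDist_pt _).pow 2) qcube_sub_ball
  have hgInt : IntegrableOn (fun x => g x ^ 2) Qcube :=
    integrableOn_cont ((Metric.continuous_infDist_pt _).pow 2) qcube_sub_ball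
  have hpcont : Continuous p := by
    rw [hpdef]
    exact (continuous_const.mul (continuous_id.dist continuous_const)).sub continuous_const
  have hic : Continuous fun x : E3 => (inner ℝ (x - y) (y - z) : ℝ) :=
    (continuous_id.sub continuous_const).inner continuous_const
  have hqcont : Continuous q := by
    rw [hqdef]
    exact continuous_const.add (continuous_const.mul hic)
  have hindp : IntegrableOn (fun x => O.indicator p x) Qcube :=
    ((integrableOn_cont hpcont hOsub2).integrable_indicator hOm).integrableOn
  have hindq : IntegrableOn (fun x => (V \ O).indicator q x) Qcube :=
    ((integrableOn_cont hqcont (Set.diff_subset.trans hVsub2)).integrable_indicator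
      (hVm.diff hOm)).integrableOn
  have h0le : (0:ℝ) ≤ ∫ x in Qcube, (g x ^ 2 - f x ^ 2) := by
    rw [integral_sub hgInt hfInt]
    have : quantE Y = ∫ x in Qcube, f x ^ 2 := rfl
    have h2 : quantE Z = ∫ x in Qcube, g x ^ 2 := rfl
    linarith [hfg]
  have hstep : (∫ x in Qcube, (g x ^ 2 - f x ^ 2)) ≤
      (∫ x in O, p x) + ∫ x in V \ O, q x := by
    calc (∫ x in Qcube, (g x ^ 2 - f x ^ 2))
        ≤ ∫ x in Qcube, (O.indicator p x + (V \ O).indicator q x) := by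
          apply setIntegral_mono_on (hgInt.sub hfInt) (hindp.add hindq)
            qcube_closed.measurableSet
          intro x hx
          exact hpoint x hx
    _ = (∫ x in Qcube, O.indicator p x) + ∫ x in Qcube, (V \ O).indicator q x :=
          integral_add hindp hindq
    _ = (∫ x in O, p x) + ∫ x in V \ O, q x := by
          rw [setIntegral_indicator hOm, setIntegral_indicator (hVm.diff hOm),
            Set.inter_eq_self_of_subset_right hOQ,
            Set.inter_eq_self_of_subset_right (Set.diff_subset.trans hVQ)]
  -- bound the O integral
  have hOp : (∫ x in O, p x) ≤ l^3 * (2*r*(s3*l) - r^2) := by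
    have hx1 : (∫ x in O, p x) ≤ ∫ _x in O, (2*r*(s3*l) - r^2) := by
      apply setIntegral_mono_on (integrableOn_cont hpcont hOsub2)
        (integrableOn_const ((measure_mono hOsub2).trans_lt
          measure_closedBall_lt_top).ne)
        hOm
      intro x hx
      rw [hpdef]
      simp only
      have := hOdist x hx
      nlinarith [hrpos]
    rw [setIntegral_const, smul_eq_mul, measureReal_def, hOvolr] at hx1
    linarith [hx1]
  -- bound the V \ O integral
  have hVOfin : volume (V \ O) ≠ ⊤ :=
    ((measure_mono (Set.diff_subset.trans hVsub2)).trans_lt measure_closedBall_lt_top).ne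
  have hintVO : IntegrableOn (fun x : E3 => x - y) (V \ O) :=
    integrableOn_cont (continuous_id.sub continuous_const) (Set.diff_subset.trans hVsub2)
  have hintVcapO : IntegrableOn (fun x : E3 => x - y) (V ∩ O) :=
    integrableOn_cont (continuous_id.sub continuous_const)
      ((Set.inter_subset_left).trans hVsub2)
  set J : E3 := ∫ x in V \ O, (x - y) with hJdef
  set K : E3 := ∫ x in V ∩ O, (x - y) with hKdef
  have hJK : J + K = 0 := by
    have hdisj : Disjoint (V \ O) (V ∩ O) :=
      Set.disjoint_of_subset_right Set.inter_subset_right Set.disjoint_sdiff_left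
    have hunion := setIntegral_union hdisj (hVm.inter hOm) hintVO hintVcapO
      (f := fun x : E3 => x - y) (μ := volume)
    rw [Set.diff_union_inter] at hunion
    rw [hJdef, hKdef, ← hunion]
    exact vor_centroid ⟨hYQ, hYcard, hmin⟩ hyY
  have hKnorm : ‖K‖ ≤ r * l^3 := by
    calc ‖K‖ ≤ ∫ x in V ∩ O, ‖x - y‖ := norm_integral_le_integral_norm _
    _ ≤ ∫ _x in V ∩ O, r := by
        apply setIntegral_mono_on (integrableOn_cont (continuous_id.sub
          continuous_const).norm ((Set.inter_subset_left).trans hVsub2))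
          (integrableOn_const ((measure_mono ((Set.inter_subset_left).trans
            hVsub2)).trans_lt measure_closedBall_lt_top).ne) (hVm.inter hOm)
        intro x hx
        have := hub x hx.1
        rw [dist_eq_norm] at this
        exact this
    _ = (volume (V ∩ O)).toReal * r := by rw [setIntegral_const, smul_eq_mul, measureReal_def]
    _ ≤ l^3 * r := by
        have hmono : volume (V ∩ O) ≤ volume O := measure_mono Set.inter_subset_right
        rw [hOvol] at hmono
        have h9 : (volume (V ∩ O)).toReal ≤ l^3 :=
          le_trans (ENNReal.toReal_mono ENNReal.ofReal_ne_top hmono)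
            (le_of_eq (ENNReal.toReal_ofReal (by positivity)))
        exact mul_le_mul_of_nonneg_right h9 hr0
    _ = r * l^3 := mul_comm _ _
  have hVOq : (∫ x in V \ O, q x) ≤ d^2 * (omega3 * r^3) + 2 * (d * (r * l^3)) := by
    have hsplit : (∫ x in V \ O, q x) =
        d^2 * (volume (V \ O)).toReal + 2 * (inner ℝ (y - z) J : ℝ) := by
      rw [hqdef]
      have hc1 : IntegrableOn (fun x : E3 => (inner ℝ (y - z) (x - y) : ℝ)) (V \ O) :=
        integrableOn_cont (continuous_const.inner (continuous_id.sub continuous_const))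
          (Set.diff_subset.trans hVsub2)
      have heqq : ∀ x : E3, (inner ℝ (x - y) (y - z) : ℝ) = (inner ℝ (y - z) (x - y) : ℝ) :=
        fun x => real_inner_comm _ _
      simp_rw [heqq]
      rw [integral_add (integrableOn_const (C := d^2) hVOfin) (hc1.const_mul 2)]
      rw [integral_const_mul, setIntegral_const, smul_eq_mul, measureReal_def]
      rw [integral_inner hintVO (y - z), ← hJdef]
      ring
    rw [hsplit]
    have hJnegK : J = -K := by
      have := hJK
      linear_combination (norm := module) this
    have hinner : (inner ℝ (y - z) J : ℝ) ≤ d * (r * l^3) := by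
      rw [hJnegK, inner_neg_right]
      calc -(inner ℝ (y - z) K : ℝ) ≤ |(inner ℝ (y - z) K : ℝ)| := neg_le_abs _
      _ ≤ ‖y - z‖ * ‖K‖ := abs_real_inner_le_norm _ _
      _ ≤ d * (r * l^3) := by
          apply mul_le_mul _ hKnorm (norm_nonneg K) hd0
          rw [hddef, dist_eq_norm]
    have hvolVO : (volume (V \ O)).toReal ≤ omega3 * r^3 :=
      volume_ball3_le y r hr0 (Set.diff_subset.trans hVsub)
    nlinarith [hinner, mul_le_mul_of_nonneg_left hvolVO (sq_nonneg d)]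
  -- final numeric contradiction
  have hmaster : (0:ℝ) ≤ l^3 * (2*r*(s3*l) - r^2) + (d^2 * (omega3 * r^3) + 2 * (d * (r * l^3))) := by
    have := h0le.trans hstep
    linarith [hOp, hVOq]
  -- substitute l = s3 r / 8
  have hs33 : s3^3 = 3 * s3 := by
    rw [pow_succ, hs3sq]
  have hl3 : l^3 = 3 * s3 * r^3 / 512 := by
    calc l^3 = (s3*r/8)^3 := by rw [hldef]
    _ = s3^3 * r^3 / 512 := by ring
    _ = 3 * s3 * r^3 / 512 := by rw [hs33]
  have he1 : 2*r*(s3*l) = 3 * r^2 / 4 := by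
    calc 2*r*(s3*l) = s3^2 * (r^2/4) := by rw [hldef]; ring
    _ = 3 * (r^2/4) := by rw [hs3sq]
    _ = 3 * r^2 / 4 := by ring
  have homle : omega3 ≤ 21/5 := by
    rw [omega3]
    nlinarith [Real.pi_lt_d2]
  have hdle : d ≤ (87/10000) * r := by
    calc d ≤ r * eps := hcon.le
    _ ≤ r * (87/10000) := mul_le_mul_of_nonneg_left hepsle hr0
    _ = (87/10000) * r := mul_comm _ _
  rw [hl3, he1] at hmaster
  exact final_numeric hd0 hrpos hs3lb hs3ub homle hom.le hdle hmaster
end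
end

section
/- The sequence a_m := m^{2/3}·inf{ E(Y) : Y ⊆ Q, #Y = m } converges as m → ∞; that is, its limit inferior and limit superior coincide (and are finite). -/
open MeasureTheory

noncomputable section

/-! ### Auxiliary material for `stmt_8` -/

namespace Stmt8

open Metric Filter Set

local instance : DecidableEq E3 := Classical.decEq _

lemma isClosed_Qcube : IsClosed Qcube := by
  have : Qcube = ⋂ i, (fun x : E3 => x i) ⁻¹' Set.Icc (0:ℝ) 1 := by
    ext x; simp [Qcube, Set.mem_iInter]
  rw [this]
  exact isClosed_iInter fun i => IsClosed.preimage ((continuous_apply i).comp (PiLp.continuous_ofLp 2 _)) isClosed_Icc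

lemma measurableSet_Qcube : MeasurableSet Qcube := isClosed_Qcube.measurableSet

lemma isCompact_Qcube : IsCompact Qcube := by
  refine Metric.isCompact_of_isClosed_isBounded isClosed_Qcube ?_
  refine (Metric.isBounded_closedBall (x := (0:E3)) (r := 2)).subset ?_
  intro x hx
  simp only [Metric.mem_closedBall, dist_zero_right]
  rw [EuclideanSpace.norm_eq]
  have h1 : ∑ i, ‖x i‖ ^ 2 ≤ 3 := by
    have : ∀ i, ‖x i‖ ^ 2 ≤ 1 := by
      intro i
      obtain ⟨h0, h1⟩ := hx i
      rw [Real.norm_eq_abs, sq_abs]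
      nlinarith
    calc ∑ i, ‖x i‖ ^ 2 ≤ ∑ _i : Fin 3, (1:ℝ) := Finset.sum_le_sum fun i _ => this i
    _ = 3 := by simp
  calc Real.sqrt (∑ i, ‖x i‖ ^ 2) ≤ Real.sqrt 4 := Real.sqrt_le_sqrt (by linarith)
  _ = 2 := by rw [show (4:ℝ) = 2^2 by norm_num, Real.sqrt_sq (by norm_num)]

lemma infinite_Qcube : Qcube.Infinite := by
  have h : Set.InjOn (fun t : ℝ => (WithLp.toLp 2 (fun _ => t) : E3)) (Set.Icc (0:ℝ) 1) := by
    intro a _ b _ hab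
    exact congrArg (fun x : E3 => x 0) hab
  have := (Set.Icc_infinite (by norm_num : (0:ℝ) < 1)).image h
  refine this.mono ?_
  rintro x ⟨t, ht, rfl⟩
  intro i
  exact ht

lemma integrableOn_aux (Y : Finset E3) {s : Set E3} (hs : IsCompact s) :
    IntegrableOn (fun x => infDist x (↑Y : Set E3) ^ 2) s :=
  (((continuous_infDist_pt (↑Y : Set E3)).pow 2).continuousOn).integrableOn_compact hs

lemma quantE_nonneg (Y : Finset E3) : 0 ≤ quantE Y :=
  setIntegral_nonneg measurableSet_Qcube fun x _ => sq_nonneg _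

lemma quantE_insert_le (Y : Finset E3) (hY : Y.Nonempty) (y : E3) :
    quantE (insert y Y) ≤ quantE Y := by
  refine setIntegral_mono_on (integrableOn_aux _ isCompact_Qcube)
    (integrableOn_aux _ isCompact_Qcube) measurableSet_Qcube ?_
  intro x _
  have h1 : infDist x (↑(insert y Y) : Set E3) ≤ infDist x (↑Y : Set E3) := by
    refine infDist_le_infDist_of_subset ?_ (by exact_mod_cast hY)
    rw [Finset.coe_insert]
    exact Set.subset_insert _ _
  exact pow_le_pow_left₀ infDist_nonneg h1 2

lemma exists_pad' (d : ℕ) (Y : Finset E3) (hY : Y.Nonempty) (hYQ : (↑Y : Set E3) ⊆ Qcube) :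
    ∃ Z : Finset E3, (↑Z : Set E3) ⊆ Qcube ∧ Z.card = Y.card + d ∧ quantE Z ≤ quantE Y := by
  induction d with
  | zero => exact ⟨Y, hYQ, rfl, le_rfl⟩
  | succ d ih =>
    obtain ⟨Z, hZQ, hZc, hZe⟩ := ih
    obtain ⟨z, hzQ, hz⟩ := infinite_Qcube.exists_notMem_finset Z
    have hZne : Z.Nonempty := by
      rw [← Finset.card_pos, hZc]
      have := hY.card_pos
      omega
    refine ⟨insert z Z, ?_, ?_, ?_⟩
    · rw [Finset.coe_insert]
      exact Set.insert_subset hzQ hZQ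
    · rw [Finset.card_insert_of_notMem hz, hZc]
      omega
    · exact (quantE_insert_le Z hZne z).trans hZe

lemma exists_pad (Y : Finset E3) (hY : Y.Nonempty) (hYQ : (↑Y : Set E3) ⊆ Qcube) (n : ℕ)
    (hn : Y.card ≤ n) :
    ∃ Z : Finset E3, (↑Z : Set E3) ⊆ Qcube ∧ Z.card = n ∧ quantE Z ≤ quantE Y := by
  obtain ⟨d, rfl⟩ := Nat.exists_eq_add_of_le hn
  exact exists_pad' d Y hY hYQ

/-- The set of achievable energies with `m` points. -/
def Sset (m : ℕ) : Set ℝ :=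
  {e : ℝ | ∃ Z : Finset E3, (↑Z : Set E3) ⊆ Qcube ∧ Z.card = m ∧ e = quantE Z}

/-- The minimal energy with `m` points. -/
def fQ (m : ℕ) : ℝ := sInf (Sset m)

lemma Sset_nonempty (m : ℕ) : (Sset m).Nonempty := by
  obtain ⟨t, ht, hc⟩ := infinite_Qcube.exists_subset_card_eq m
  exact ⟨quantE t, t, ht, hc, rfl⟩

lemma Sset_bddBelow (m : ℕ) : BddBelow (Sset m) := by
  refine ⟨0, ?_⟩
  rintro e ⟨Z, -, -, rfl⟩
  exact quantE_nonneg Z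

lemma fQ_nonneg (m : ℕ) : 0 ≤ fQ m :=
  le_csInf (Sset_nonempty m) (by rintro e ⟨Z, -, -, rfl⟩; exact quantE_nonneg Z)

lemma fQ_le {m : ℕ} {Z : Finset E3} (hZQ : (↑Z : Set E3) ⊆ Qcube) (hc : Z.card = m) :
    fQ m ≤ quantE Z :=
  csInf_le (Sset_bddBelow m) ⟨Z, hZQ, hc, rfl⟩

lemma fQ_anti {m n : ℕ} (hm : 1 ≤ m) (hmn : m ≤ n) : fQ n ≤ fQ m := by
  refine le_csInf (Sset_nonempty m) ?_
  rintro e ⟨Z, hZQ, hZc, rfl⟩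
  have hZne : Z.Nonempty := by rw [← Finset.card_pos, hZc]; omega
  obtain ⟨W, hWQ, hWc, hWe⟩ := exists_pad Z hZne hZQ n (by omega)
  exact (fQ_le hWQ hWc).trans hWe

section Scaling

variable (k : ℕ) (v : Fin 3 → Fin k)

/-- Corner of a subcube. -/
def bvec : E3 := WithLp.toLp 2 (fun i => (v i : ℝ) / k)

/-- Affine contraction onto a subcube. -/
def Tmap (x : E3) : E3 := (k:ℝ)⁻¹ • x + bvec k v

/-- Subcube of side `1/k`. -/
def subQ : Set E3 := {x | ∀ i, x i ∈ Set.Icc ((v i : ℝ)/k) (((v i : ℝ)+1)/k)}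

lemma isClosed_subQ : IsClosed (subQ k v) := by
  have : subQ k v = ⋂ i, (fun x : E3 => x i) ⁻¹' Set.Icc ((v i : ℝ)/k) (((v i : ℝ)+1)/k) := by
    ext x; simp [subQ, Set.mem_iInter]
  rw [this]
  exact isClosed_iInter fun i => IsClosed.preimage ((continuous_apply i).comp (PiLp.continuous_ofLp 2 _)) isClosed_Icc

variable {k v}

lemma subQ_subset_Qcube (hk : 1 ≤ k) : subQ k v ⊆ Qcube := by
  have hk0 : (0:ℝ) < k := by exact_mod_cast hk
  intro x hx i
  obtain ⟨h0, h1⟩ := hx i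
  have hvi : (v i : ℝ) ≤ (k:ℝ) - 1 := by
    have : (v i : ℕ) < k := (v i).isLt
    have : (v i : ℝ) < k := by exact_mod_cast this
    have : (v i : ℝ) + 1 ≤ k := by
      have h2 : (v i : ℕ) + 1 ≤ k := (v i).isLt
      exact_mod_cast h2
    linarith
  constructor
  · have : (0:ℝ) ≤ (v i : ℝ)/k := div_nonneg (by positivity) hk0.le
    linarith
  · have : ((v i : ℝ)+1)/k ≤ 1 := by
      rw [div_le_one hk0]; linarith
    linarith

lemma isCompact_subQ (hk : 1 ≤ k) : IsCompact (subQ k v) :=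
  IsCompact.of_isClosed_subset isCompact_Qcube (isClosed_subQ k v) (subQ_subset_Qcube hk)

lemma measurableSet_subQ : MeasurableSet (subQ k v) := (isClosed_subQ k v).measurableSet

lemma Tmap_mem_subQ_iff (hk : 1 ≤ k) (u : E3) : Tmap k v u ∈ subQ k v ↔ u ∈ Qcube := by
  have hk0 : (0:ℝ) < k := by exact_mod_cast hk
  have hki : (0:ℝ) < (k:ℝ)⁻¹ := inv_pos.2 hk0
  have hcoord : ∀ i, Tmap k v u i = (k:ℝ)⁻¹ * u i + (v i : ℝ)/k := fun i => rfl
  constructor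
  · intro h i
    obtain ⟨h1, h2⟩ := h i
    rw [hcoord i] at h1 h2
    have e1 : ((v i : ℝ)+1)/k = (v i : ℝ)/k + (k:ℝ)⁻¹ := by ring
    rw [e1] at h2
    constructor
    · have h3 : 0 ≤ (k:ℝ)⁻¹ * u i := by linarith
      nlinarith
    · have h3 : (k:ℝ)⁻¹ * u i ≤ (k:ℝ)⁻¹ * 1 := by rw [mul_one]; linarith
      exact le_of_mul_le_mul_left h3 hki
  · intro h i
    obtain ⟨h1, h2⟩ := h i
    rw [Set.mem_Icc, hcoord i]
    have e1 : ((v i : ℝ)+1)/k = (v i : ℝ)/k + (k:ℝ)⁻¹ := by ring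
    rw [e1]
    constructor
    · nlinarith
    · nlinarith

lemma Tmap_mem_Qcube (hk : 1 ≤ k) {u : E3} (hu : u ∈ Qcube) : Tmap k v u ∈ Qcube :=
  subQ_subset_Qcube hk ((Tmap_mem_subQ_iff hk u).2 hu)

lemma dist_Tmap (hk : 1 ≤ k) (x y : E3) : dist (Tmap k v x) (Tmap k v y) = (k:ℝ)⁻¹ * dist x y := by
  have hk0 : (0:ℝ) < k := by exact_mod_cast hk
  rw [Tmap, Tmap, dist_add_right, dist_smul₀, Real.norm_eq_abs, abs_of_pos (inv_pos.2 hk0)]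

lemma infDist_Tmap (hk : 1 ≤ k) (Z : Finset E3) (hZ : Z.Nonempty) (x : E3) :
    infDist (Tmap k v x) (↑(Z.image (Tmap k v)) : Set E3) = (k:ℝ)⁻¹ * infDist x (↑Z : Set E3) := by
  have hk0 : (0:ℝ) < k := by exact_mod_cast hk
  have hki : (0:ℝ) < (k:ℝ)⁻¹ := inv_pos.2 hk0
  have hZc : (↑Z : Set E3).Nonempty := by exact_mod_cast hZ
  have hIc : (↑(Z.image (Tmap k v)) : Set E3).Nonempty := by exact_mod_cast hZ.image _
  apply le_antisymm
  · obtain ⟨y, hy, hxy⟩ := Z.finite_toSet.isClosed.exists_infDist_eq_dist hZc x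
    rw [hxy, ← dist_Tmap hk x y]
    refine infDist_le_dist_of_mem ?_
    simp only [Finset.coe_image]
    exact Set.mem_image_of_mem _ hy
  · obtain ⟨z, hz, hxz⟩ :=
      (Z.image (Tmap k v)).finite_toSet.isClosed.exists_infDist_eq_dist hIc (Tmap k v x)
    rw [hxz]
    simp only [Finset.coe_image] at hz
    obtain ⟨y, hy, rfl⟩ := hz
    rw [dist_Tmap hk x y]
    exact mul_le_mul_of_nonneg_left (infDist_le_dist_of_mem hy) hki.le

lemma integral_scaled (Z : Finset E3) (hZ : Z.Nonempty) (hk : 1 ≤ k) :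
    ∫ x in subQ k v, infDist x (↑(Z.image (Tmap k v)) : Set E3) ^ 2 =
      ((k:ℝ)^5)⁻¹ * quantE Z := by
  have hk0 : (0:ℝ) < k := by exact_mod_cast hk
  set F : E3 → ℝ := (subQ k v).indicator (fun x => infDist x (↑(Z.image (Tmap k v)) : Set E3) ^ 2)
    with hF
  have h1 : ∫ x in subQ k v, infDist x (↑(Z.image (Tmap k v)) : Set E3) ^ 2 = ∫ x, F x :=
    (integral_indicator measurableSet_subQ).symm
  have h2 : ∀ u : E3, F ((k:ℝ)⁻¹ • u + bvec k v) =
      Qcube.indicator (fun u => ((k:ℝ)^2)⁻¹ * (infDist u (↑Z : Set E3) ^ 2)) u := by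
    intro u
    have hTu : (k:ℝ)⁻¹ • u + bvec k v = Tmap k v u := rfl
    by_cases hu : u ∈ Qcube
    · rw [hTu, hF, Set.indicator_of_mem ((Tmap_mem_subQ_iff hk u).2 hu), Set.indicator_of_mem hu,
        infDist_Tmap hk Z hZ u, mul_pow, inv_pow]
    · rw [hTu, hF, Set.indicator_of_notMem (fun h => hu ((Tmap_mem_subQ_iff hk u).1 h)),
        Set.indicator_of_notMem hu]
  have h3 : ∫ u : E3, F ((k:ℝ)⁻¹ • u + bvec k v) = ((k:ℝ)^2)⁻¹ * quantE Z := by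
    rw [show (fun u : E3 => F ((k:ℝ)⁻¹ • u + bvec k v)) =
        Qcube.indicator (fun u => ((k:ℝ)^2)⁻¹ * (infDist u (↑Z : Set E3) ^ 2)) from funext h2]
    rw [integral_indicator measurableSet_Qcube, integral_const_mul]
    rfl
  have h4 : ∫ u : E3, F ((k:ℝ)⁻¹ • u + bvec k v) = (k:ℝ)^3 * ∫ x, F x := by
    have hcs := MeasureTheory.Measure.integral_comp_smul (volume : Measure E3)
      (fun x => F (x + bvec k v)) ((k:ℝ)⁻¹)
    rw [integral_add_right_eq_self F (bvec k v)] at hcs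
    rw [hcs, finrank_euclideanSpace_fin, smul_eq_mul]
    congr 1
    rw [inv_pow, inv_inv, abs_of_pos (by positivity)]
  rw [h1]
  have h5 : (k:ℝ)^3 * ∫ x, F x = ((k:ℝ)^2)⁻¹ * quantE Z := by rw [← h4, h3]
  have h6 : ∫ x, F x = ((k:ℝ)^3)⁻¹ * (((k:ℝ)^2)⁻¹ * quantE Z) := by
    field_simp at h5 ⊢
    linarith
  rw [h6]
  ring

end Scaling

lemma Qcube_subset_iUnion {k : ℕ} (hk : 1 ≤ k) :
    Qcube ⊆ ⋃ v : Fin 3 → Fin k, subQ k v := by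
  intro x hx
  have hk0 : (0:ℝ) < k := by exact_mod_cast hk
  have hlt : ∀ i : Fin 3, min (Nat.floor (x i * k)) (k-1) < k := fun i => by omega
  refine Set.mem_iUnion.2 ⟨fun i => ⟨min (Nat.floor (x i * k)) (k-1), hlt i⟩, fun i => ?_⟩
  obtain ⟨h0, h1⟩ := hx i
  have hxk0 : 0 ≤ x i * k := by positivity
  rw [Set.mem_Icc]
  simp only [Fin.val_mk]
  set nn : ℕ := min (Nat.floor (x i * k)) (k-1) with hnn
  constructor
  · have hnle : (nn:ℝ) ≤ x i * k := by
      have h2 : nn ≤ Nat.floor (x i * k) := min_le_left _ _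
      have h3 : (Nat.floor (x i * k) : ℝ) ≤ x i * k := Nat.floor_le hxk0
      have h4 : (nn:ℝ) ≤ (Nat.floor (x i * k) : ℝ) := by exact_mod_cast h2
      linarith
    rw [div_le_iff₀ hk0]
    linarith
  · rw [le_div_iff₀ hk0]
    by_cases hcase : Nat.floor (x i * k) ≤ k - 1
    · have hne : nn = Nat.floor (x i * k) := by omega
      have h2 : x i * k < Nat.floor (x i * k) + 1 := Nat.lt_floor_add_one _
      have h4 : (nn:ℝ) = (Nat.floor (x i * k) : ℝ) := by exact_mod_cast hne
      linarith
    · have hne : nn = k - 1 := by omega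
      have h4 : (nn:ℝ) = (k:ℝ) - 1 := by
        rw [hne, Nat.cast_sub hk]
        norm_num
      nlinarith

lemma setIntegral_biUnion_le {ι : Type*} [DecidableEq ι] (s : Finset ι) (S : ι → Set E3)
    (hS : ∀ i, MeasurableSet (S i)) (f : E3 → ℝ) (hf : ∀ x, 0 ≤ f x)
    (hint : ∀ i, IntegrableOn f (S i)) :
    ∫ x in ⋃ i ∈ s, S i, f x ≤ ∑ i ∈ s, ∫ x in S i, f x := by
  induction s using Finset.induction with
  | empty => simp
  | @insert a s hns ih =>
    have hU : MeasurableSet (⋃ i ∈ s, S i) :=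
      MeasurableSet.biUnion s.countable_toSet fun i _ => hS i
    have hintU : IntegrableOn f (⋃ i ∈ s, S i) := by
      rw [integrableOn_finset_iUnion]
      exact fun i _ => hint i
    rw [Finset.set_biUnion_insert, Finset.sum_insert hns]
    have hsplit : S a ∪ ⋃ i ∈ s, S i = S a ∪ ((⋃ i ∈ s, S i) \ S a) := by
      rw [Set.union_diff_self]
    rw [hsplit, setIntegral_union disjoint_sdiff_self_right (hU.diff (hS a)) (hint a)
      (hintU.mono_set Set.diff_subset)]
    have hle : ∫ x in (⋃ i ∈ s, S i) \ S a, f x ≤ ∫ x in ⋃ i ∈ s, S i, f x :=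
      setIntegral_mono_set hintU (Filter.Eventually.of_forall fun x => hf x)
        (HasSubset.Subset.eventuallyLE Set.diff_subset)
    linarith [ih]

lemma key {k m : ℕ} (hk : 1 ≤ k) (hm : 1 ≤ m) :
    (k:ℝ)^2 * fQ (k^3*m) ≤ fQ m := by
  classical
  have hk0 : (0:ℝ) < k := by exact_mod_cast hk
  refine le_csInf (Sset_nonempty m) ?_
  rintro e ⟨Z, hZQ, hZc, rfl⟩
  have hZne : Z.Nonempty := by rw [← Finset.card_pos, hZc]; omega
  haveI : NeZero k := ⟨by omega⟩
  set Y' : Finset E3 := Finset.univ.biUnion (fun v : Fin 3 → Fin k => Z.image (Tmap k v))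
    with hY'
  have hY'ne : Y'.Nonempty := by
    obtain ⟨z, hz⟩ := hZne
    have hY'mem : Tmap k (fun _ => (⟨0, by omega⟩ : Fin k)) z ∈ Y' := by
      rw [hY', Finset.mem_biUnion]
      exact ⟨fun _ => ⟨0, by omega⟩, Finset.mem_univ _, Finset.mem_image_of_mem _ hz⟩
    exact ⟨_, hY'mem⟩
  have hY'Q : (↑Y' : Set E3) ⊆ Qcube := by
    intro x hx
    rw [Finset.mem_coe, hY', Finset.mem_biUnion] at hx
    obtain ⟨v, -, hxv⟩ := hx
    obtain ⟨z, hz, rfl⟩ := Finset.mem_image.1 hxv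
    exact Tmap_mem_Qcube hk (hZQ hz)
  have hcard : Y'.card ≤ k^3 * m := by
    calc Y'.card ≤ ∑ v : Fin 3 → Fin k, (Z.image (Tmap k v)).card := Finset.card_biUnion_le
    _ ≤ ∑ _v : Fin 3 → Fin k, m := by
        refine Finset.sum_le_sum fun v _ => ?_
        calc (Z.image (Tmap k v)).card ≤ Z.card := Finset.card_image_le
        _ = m := hZc
    _ = k^3 * m := by
        rw [Finset.sum_const, Finset.card_univ, smul_eq_mul]
        congr 1
        simp [Fintype.card_fun]
  have hE : quantE Y' ≤ ((k:ℝ)^2)⁻¹ * quantE Z := by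
    have h1 : quantE Y' ≤ ∑ v : Fin 3 → Fin k, ∫ x in subQ k v,
        infDist x (↑Y' : Set E3) ^ 2 := by
      have hQU : quantE Y' ≤ ∫ x in ⋃ v ∈ (Finset.univ : Finset (Fin 3 → Fin k)), subQ k v,
          infDist x (↑Y' : Set E3) ^ 2 := by
        refine setIntegral_mono_set ?_ (Filter.Eventually.of_forall fun x => sq_nonneg _) ?_
        · rw [integrableOn_finset_iUnion]
          exact fun v _ => integrableOn_aux Y' (isCompact_subQ hk)
        · refine HasSubset.Subset.eventuallyLE ?_
          intro x hx
          have := Qcube_subset_iUnion hk hx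
          simpa using this
      refine hQU.trans ?_
      refine (setIntegral_biUnion_le Finset.univ (subQ k) (fun v => measurableSet_subQ)
        _ (fun x => sq_nonneg _) (fun v => integrableOn_aux Y' (isCompact_subQ hk))).trans ?_
      exact le_rfl
    have h2 : ∀ v : Fin 3 → Fin k, ∫ x in subQ k v, infDist x (↑Y' : Set E3) ^ 2 ≤
        ((k:ℝ)^5)⁻¹ * quantE Z := by
      intro v
      rw [← integral_scaled Z hZne hk]
      refine setIntegral_mono_on (integrableOn_aux Y' (isCompact_subQ hk))
        (integrableOn_aux _ (isCompact_subQ hk)) measurableSet_subQ ?_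
      intro x _
      refine pow_le_pow_left₀ infDist_nonneg ?_ 2
      refine infDist_le_infDist_of_subset ?_ (by exact_mod_cast hZne.image (Tmap k v))
      intro z hz
      rw [Finset.mem_coe, hY', Finset.mem_biUnion]
      exact ⟨v, Finset.mem_univ _, by exact_mod_cast hz⟩
    calc quantE Y' ≤ ∑ v : Fin 3 → Fin k, ∫ x in subQ k v, infDist x (↑Y' : Set E3) ^ 2 := h1
    _ ≤ ∑ _v : Fin 3 → Fin k, ((k:ℝ)^5)⁻¹ * quantE Z := Finset.sum_le_sum fun v _ => h2 v
    _ = (k:ℝ)^3 * (((k:ℝ)^5)⁻¹ * quantE Z) := by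
        rw [Finset.sum_const, Finset.card_univ]
        simp only [Fintype.card_fun, Fintype.card_fin, smul_eq_mul]
        push_cast
        ring
    _ = ((k:ℝ)^2)⁻¹ * quantE Z := by
        field_simp
  obtain ⟨W, hWQ, hWc, hWe⟩ := exists_pad Y' hY'ne hY'Q (k^3*m) hcard
  have hfW : fQ (k^3*m) ≤ ((k:ℝ)^2)⁻¹ * quantE Z :=
    (fQ_le hWQ hWc).trans (hWe.trans hE)
  calc (k:ℝ)^2 * fQ (k^3*m) ≤ (k:ℝ)^2 * (((k:ℝ)^2)⁻¹ * quantE Z) := by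
        exact mul_le_mul_of_nonneg_left hfW (by positivity)
  _ = quantE Z := by field_simp

/-- The scaled energy sequence. -/
def gseq (n : ℕ) : ℝ := (n:ℝ) ^ ((2:ℝ)/3) * fQ n

lemma gseq_nonneg (n : ℕ) : 0 ≤ gseq n :=
  mul_nonneg (Real.rpow_nonneg (Nat.cast_nonneg n) _) (fQ_nonneg n)

lemma find_k {m n : ℕ} (hm : 1 ≤ m) (hn : m ≤ n) :
    ∃ k : ℕ, 1 ≤ k ∧ k^3*m ≤ n ∧ n < (k+1)^3*m := by
  classical
  set P : ℕ → Prop := fun k => k^3*m ≤ n with hP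
  have hP1 : P 1 := by simpa [hP] using hn
  have h1n : 1 ≤ n := hm.trans hn
  refine ⟨Nat.findGreatest P n, Nat.le_findGreatest h1n hP1, Nat.findGreatest_spec h1n hP1, ?_⟩
  by_contra hcon
  push_neg at hcon
  have hsle : (Nat.findGreatest P n + 1) ≤ n := by
    calc Nat.findGreatest P n + 1 ≤ (Nat.findGreatest P n + 1)^3 :=
          Nat.le_self_pow (by norm_num) _
    _ ≤ (Nat.findGreatest P n + 1)^3 * m := Nat.le_mul_of_pos_right _ hm
    _ ≤ n := hcon
  exact Nat.findGreatest_is_greatest (Nat.lt_succ_self _) hsle hcon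

lemma rpow_23 (a : ℕ) : ((a:ℝ)^3) ^ ((2:ℝ)/3) = (a:ℝ)^2 := by
  have ha : (0:ℝ) ≤ a := Nat.cast_nonneg a
  rw [← Real.rpow_natCast (a:ℝ) 3, ← Real.rpow_mul ha, ← Real.rpow_natCast (a:ℝ) 2]
  norm_num

lemma gseq_bound {m K n : ℕ} (hm : 1 ≤ m) (hK : 1 ≤ K) (hn : K^3*m ≤ n) :
    gseq n ≤ (((K:ℝ)+1)/K)^2 * gseq m := by
  have hK0 : (0:ℝ) < K := by exact_mod_cast hK
  have hmn : m ≤ n := le_trans (Nat.le_mul_of_pos_left m (pow_pos hK 3)) hn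
  obtain ⟨k, hk1, hkle, hklt⟩ := find_k hm hmn
  have hk0 : (0:ℝ) < k := by exact_mod_cast hk1
  have hKk : K ≤ k := by
    by_contra hcon
    push_neg at hcon
    have h3 : (k+1) ≤ K := hcon
    have h4 : (k+1)^3 ≤ K^3 := Nat.pow_le_pow_left h3 3
    have h5 : (k+1)^3*m ≤ K^3*m := Nat.mul_le_mul_right m h4
    exact lt_irrefl n (lt_of_lt_of_le hklt (h5.trans hn))
  -- fQ n ≤ fQ (k^3 m) ≤ k⁻² fQ m
  have hstep1 : fQ n ≤ fQ (k^3*m) := fQ_anti (Nat.mul_pos (pow_pos hk1 3) hm) hkle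
  have hstep2 : (k:ℝ)^2 * fQ (k^3*m) ≤ fQ m := key hk1 hm
  have hfn : fQ n ≤ ((k:ℝ)^2)⁻¹ * fQ m := by
    have hpos : (0:ℝ) < (k:ℝ)^2 := by positivity
    have h2 : fQ (k^3*m) ≤ ((k:ℝ)^2)⁻¹ * fQ m := by
      rw [inv_mul_eq_div, le_div_iff₀ hpos]
      nlinarith [hstep2]
    exact hstep1.trans h2
  -- n^{2/3} ≤ (k+1)² m^{2/3}
  have hnb : (n:ℝ) ^ ((2:ℝ)/3) ≤ ((k:ℝ)+1)^2 * (m:ℝ)^((2:ℝ)/3) := by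
    have h1 : (n:ℝ) ≤ ((k+1:ℕ):ℝ)^3 * m := by
      have := hklt.le
      exact_mod_cast this
    have h2 : (n:ℝ)^((2:ℝ)/3) ≤ (((k+1:ℕ):ℝ)^3 * m)^((2:ℝ)/3) :=
      Real.rpow_le_rpow (Nat.cast_nonneg n) h1 (by norm_num)
    have h3 : (((k+1:ℕ):ℝ)^3 * m)^((2:ℝ)/3) =
        (((k+1:ℕ):ℝ)^3)^((2:ℝ)/3) * (m:ℝ)^((2:ℝ)/3) :=
      Real.mul_rpow (by positivity) (Nat.cast_nonneg m)
    have h4 : (((k+1:ℕ):ℝ)^3)^((2:ℝ)/3) = ((k+1:ℕ):ℝ)^2 := rpow_23 (k+1)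
    have h5 : ((k+1:ℕ):ℝ) = (k:ℝ)+1 := by push_cast; ring
    rw [h3, h4, h5] at h2
    exact h2
  have hq : gseq n ≤ (((k:ℝ)+1)/k)^2 * gseq m := by
    have hfQn0 : 0 ≤ fQ n := fQ_nonneg n
    have hfQm0 : 0 ≤ fQ m := fQ_nonneg m
    calc gseq n = (n:ℝ)^((2:ℝ)/3) * fQ n := rfl
    _ ≤ (((k:ℝ)+1)^2 * (m:ℝ)^((2:ℝ)/3)) * (((k:ℝ)^2)⁻¹ * fQ m) := by
        refine mul_le_mul hnb hfn hfQn0 (by positivity)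
    _ = (((k:ℝ)+1)/k)^2 * ((m:ℝ)^((2:ℝ)/3) * fQ m) := by
        field_simp
    _ = (((k:ℝ)+1)/k)^2 * gseq m := rfl
  refine hq.trans ?_
  refine mul_le_mul_of_nonneg_right ?_ (gseq_nonneg m)
  have hKr : (K:ℝ) ≤ k := by exact_mod_cast hKk
  have h1 : ((k:ℝ)+1)/k ≤ ((K:ℝ)+1)/K := by
    rw [div_le_div_iff₀ hk0 hK0]
    nlinarith
  have h2 : 0 ≤ ((k:ℝ)+1)/k := by positivity
  exact pow_le_pow_left₀ h2 h1 2

lemma gseq_bddAbove : ∀ n, 1 ≤ n → gseq n ≤ 4 * gseq 1 := by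
  intro n hn
  have := gseq_bound (m := 1) (K := 1) le_rfl le_rfl (by simpa using hn)
  calc gseq n ≤ (((1:ℝ)+1)/1)^2 * gseq 1 := by exact_mod_cast this
  _ = 4 * gseq 1 := by norm_num

lemma limsup_le_gseq {m : ℕ} (hm : 1 ≤ m) :
    Filter.limsup gseq Filter.atTop ≤ gseq m := by
  have hcob : Filter.IsCoboundedUnder (· ≤ ·) Filter.atTop gseq :=
    Filter.IsBoundedUnder.isCoboundedUnder_le ⟨0, by
      rw [Filter.eventually_map]
      exact Filter.Eventually.of_forall fun n => gseq_nonneg n⟩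
  refine le_of_forall_pos_le_add ?_
  intro ε hε
  set K : ℕ := max 1 (Nat.ceil (3 * gseq m / ε)) with hKdef
  have hK1 : 1 ≤ K := le_max_left _ _
  have hK0 : (0:ℝ) < K := by exact_mod_cast hK1
  have hKge : 3 * gseq m / ε ≤ K := by
    calc 3 * gseq m / ε ≤ (Nat.ceil (3 * gseq m / ε) : ℝ) := Nat.le_ceil _
    _ ≤ K := by exact_mod_cast le_max_right _ _
  have hbd : (((K:ℝ)+1)/K)^2 * gseq m ≤ gseq m + ε := by
    have hg0 : 0 ≤ gseq m := gseq_nonneg m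
    have hK1r : (1:ℝ) ≤ (K:ℝ) := by exact_mod_cast hK1
    have hfrac : (((K:ℝ)+1)/K)^2 ≤ 1 + 3/K := by
      rw [div_pow, div_le_iff₀ (by positivity : (0:ℝ) < (K:ℝ)^2)]
      have he : (1 + 3/(K:ℝ))*(K:ℝ)^2 = (K:ℝ)^2 + 3*K := by field_simp
      rw [he]
      nlinarith
    have hKeps : (3/(K:ℝ)) * gseq m ≤ ε := by
      rw [div_mul_eq_mul_div, div_le_iff₀ hK0]
      calc 3 * gseq m = ε * (3 * gseq m / ε) := by field_simp
      _ ≤ ε * K := mul_le_mul_of_nonneg_left hKge hε.le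
    calc (((K:ℝ)+1)/K)^2 * gseq m ≤ (1 + 3/K) * gseq m :=
          mul_le_mul_of_nonneg_right hfrac hg0
    _ = gseq m + (3/K) * gseq m := by ring
    _ ≤ gseq m + ε := by linarith
  refine Filter.limsup_le_of_le hcob ?_
  filter_upwards [Filter.eventually_ge_atTop (K^3*m)] with n hn
  exact (gseq_bound hm hK1 hn).trans hbd

end Stmt8

theorem stmt_8 :
    ∃ L : ℝ,
      Filter.Tendsto
        (fun m : ℕ =>
          (m : ℝ) ^ ((2 : ℝ) / 3) *
            sInf {e : ℝ | ∃ Z : Finset E3, (↑Z : Set E3) ⊆ Qcube ∧ Z.card = m ∧ e = quantE Z})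
        Filter.atTop (nhds L) := by
  classical
  have hfun : (fun m : ℕ =>
      (m : ℝ) ^ ((2 : ℝ) / 3) *
        sInf {e : ℝ | ∃ Z : Finset E3, (↑Z : Set E3) ⊆ Qcube ∧ Z.card = m ∧ e = quantE Z}) =
      Stmt8.gseq := rfl
  rw [hfun]
  have hb_above : Filter.IsBoundedUnder (· ≤ ·) Filter.atTop Stmt8.gseq := by
    refine ⟨4 * Stmt8.gseq 1, ?_⟩
    rw [Filter.eventually_map]
    filter_upwards [Filter.eventually_ge_atTop 1] with n hn
    exact Stmt8.gseq_bddAbove n hn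
  have hb_below : Filter.IsBoundedUnder (· ≥ ·) Filter.atTop Stmt8.gseq :=
    ⟨0, by
      rw [Filter.eventually_map]
      exact Filter.Eventually.of_forall fun n => Stmt8.gseq_nonneg n⟩
  refine ⟨Filter.limsup Stmt8.gseq Filter.atTop, ?_⟩
  refine tendsto_of_le_liminf_of_limsup_le ?_ le_rfl hb_above hb_below
  refine Filter.le_liminf_of_le (Filter.IsBoundedUnder.isCoboundedUnder_ge hb_above) ?_
  filter_upwards [Filter.eventually_ge_atTop 1] with m hm
  exact Stmt8.limsup_le_gseq hm
end
end
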